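/- Let q ∈ k be nonzero, n ≥ 1, and C = k⟨a₁,a₂,a₃⟩/(a₂a₁ − qⁿa₁a₂, a₃a₁ − q^{n²}a₁a₃, a₃a₂ − qⁿa₂a₃), with grading deg a₁ = deg a₃ = n, deg a₂ = 2. Then f = a₂ⁿ − q^{n(n−1)/2} a₁a₃ is a normal element of C, satisfying a₁ f = q^{−n²} f a₁, a₂ f = f a₂, and a₃ f = q^{n²} f a₃; moreover, for any p ∈ k with p² = q^{−n²}, the assignments τ(a₁) = p a₁, τ(a₂) = a₂, τ(a₃) = p^{−1} a₃ define a graded automorphism τ of C with τ² = σ (the normalizing automorphism of f) and τ(f) = f. -/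

import Mathlib

/-- The defining relations of the skew polynomial algebra
`C = k⟨a₁,a₂,a₃⟩/(a₂a₁ − qⁿa₁a₂, a₃a₁ − q^{n²}a₁a₃, a₃a₂ − qⁿa₂a₃)`. -/
def rel18 (k : Type) [Field k] (q : k) (n : ℕ) :
    FreeAlgebra k (Fin 3) → FreeAlgebra k (Fin 3) → Prop := fun x y =>
  letI a : Fin 3 → FreeAlgebra k (Fin 3) := fun i => FreeAlgebra.ι k i
  (x = a 1 * a 0 ∧ y = (q ^ n) • (a 0 * a 1)) ∨
  (x = a 2 * a 0 ∧ y = (q ^ (n ^ 2)) • (a 0 * a 2)) ∨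
  (x = a 2 * a 1 ∧ y = (q ^ n) • (a 1 * a 2))

/-- The algebra `C` of case (g). -/
abbrev C18 (k : Type) [Field k] (q : k) (n : ℕ) : Type := RingQuot (rel18 k q n)

/-- The generators `a₁, a₂, a₃` of `C18`. -/
noncomputable def gen18 (k : Type) [Field k] (q : k) (n : ℕ) (i : Fin 3) :
    C18 k q n :=
  RingQuot.mkAlgHom k (rel18 k q n) (FreeAlgebra.ι k i)

namespace Stmt18

lemma pow_swap {R B : Type*} [CommSemiring R] [Semiring B] [Algebra R B]
    {x y : B} {c : R} (h : y * x = c • (x * y)) (m : ℕ) :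
    y ^ m * x = c ^ m • (x * y ^ m) := by
  induction m with
  | zero => simp
  | succ m ih =>
    rw [pow_succ' y m, mul_assoc, ih, mul_smul_comm, ← mul_assoc, h,
      smul_mul_assoc, mul_assoc, smul_smul, ← pow_succ', ← pow_succ]

lemma pow_swap' {R B : Type*} [CommSemiring R] [Semiring B] [Algebra R B]
    {x y : B} {c : R} (h : y * x = c • (x * y)) (m : ℕ) :
    y * x ^ m = c ^ m • (x ^ m * y) := by
  induction m with
  | zero => simp
  | succ m ih =>
    rw [pow_succ x m, ← mul_assoc, ih, smul_mul_assoc, mul_assoc, h,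
      mul_smul_comm, smul_smul, ← mul_assoc, ← pow_succ, ← pow_succ]

variable {k : Type} [Field k] {q : k} {n : ℕ}

lemma r1 : gen18 k q n 1 * gen18 k q n 0 =
    (q ^ n) • (gen18 k q n 0 * gen18 k q n 1) := by
  have h := RingQuot.mkAlgHom_rel k
    (s := rel18 k q n) (Or.inl ⟨rfl, rfl⟩)
  simpa [gen18] using h

lemma r2 : gen18 k q n 2 * gen18 k q n 0 =
    (q ^ (n ^ 2)) • (gen18 k q n 0 * gen18 k q n 2) := by
  have h := RingQuot.mkAlgHom_rel k
    (s := rel18 k q n) (Or.inr (Or.inl ⟨rfl, rfl⟩))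
  simpa [gen18] using h

lemma r3 : gen18 k q n 2 * gen18 k q n 1 =
    (q ^ n) • (gen18 k q n 1 * gen18 k q n 2) := by
  have h := RingQuot.mkAlgHom_rel k
    (s := rel18 k q n) (Or.inr (Or.inr ⟨rfl, rfl⟩))
  simpa [gen18] using h

end Stmt18

namespace Stmt18

variable {k : Type} [Field k] {q : k} {n : ℕ}

noncomputable def tau (k : Type) [Field k] (q : k) (n : ℕ) (p : k) :
    C18 k q n →ₐ[k] C18 k q n :=
  RingQuot.liftAlgHom k
    ⟨FreeAlgebra.lift k (fun i => (![p, 1, p⁻¹] : Fin 3 → k) i • gen18 k q n i), by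
      rintro x y (⟨rfl, rfl⟩ | ⟨rfl, rfl⟩ | ⟨rfl, rfl⟩) <;>
        simp only [map_mul, map_smul, FreeAlgebra.lift_ι_apply, Matrix.cons_val_zero,
          Matrix.cons_val_one, Matrix.head_cons, Matrix.cons_val_two, Matrix.tail_cons,
          one_smul, smul_mul_assoc, mul_smul_comm, smul_smul]
      · rw [r1, smul_smul, mul_comm]
      · rw [r2, smul_smul]; ring_nf
      · rw [r3, smul_smul, mul_comm]⟩

lemma tau_gen (p : k) (i : Fin 3) :
    tau k q n p (gen18 k q n i) = (![p, 1, p⁻¹] : Fin 3 → k) i • gen18 k q n i := by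
  rw [gen18, tau, RingQuot.liftAlgHom_mkAlgHom_apply, FreeAlgebra.lift_ι_apply, gen18]

lemma tau_comp (p p' : k) (hp : p ≠ 0) (hpp' : p' * p = 1) :
    (tau k q n p').comp (tau k q n p) = AlgHom.id k (C18 k q n) := by
  apply RingQuot.ringQuot_ext'
  apply FreeAlgebra.hom_ext
  funext i
  show (tau k q n p') (tau k q n p (gen18 k q n i)) = gen18 k q n i
  have hp' : p' ≠ 0 := left_ne_zero_of_mul_eq_one hpp'
  have h1 : p * p' = 1 := by rw [mul_comm]; exact hpp'
  fin_cases i <;>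
    simp [tau_gen, smul_smul, h1, hpp', ← mul_inv_rev]

end Stmt18

/-- in the skew polynomial algebra `C` (with `deg a₁ = deg a₃ =
n`, `deg a₂ = 2`), the element `f = a₂ⁿ − q^{n(n−1)/2} a₁a₃` is normal,
satisfying `a₁ f = q^{−n²} f a₁`, `a₂ f = f a₂`, `a₃ f = q^{n²} f a₃`;
moreover for any `p` with `p² = q^{−n²}`, the assignments `τ(a₁) = p a₁`,
`τ(a₂) = a₂`, `τ(a₃) = p⁻¹ a₃` define a graded automorphism `τ` of `C` with
`τ² = σ` (the normalizing automorphism of `f`) and `τ(f) = f`. -/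
theorem stmt_18 (k : Type) [Field k] [IsAlgClosed k] [CharZero k]
    (q : k) (hq : q ≠ 0) (n : ℕ) (hn : 1 ≤ n) :
    letI a : Fin 3 → C18 k q n := gen18 k q n
    letI f : C18 k q n := a 1 ^ n - (q ^ (n * (n - 1) / 2)) • (a 0 * a 2)
    -- the normality identities
    (a 0 * f = (q ^ (n ^ 2))⁻¹ • (f * a 0)) ∧
    (a 1 * f = f * a 1) ∧
    (a 2 * f = (q ^ (n ^ 2)) • (f * a 2)) ∧
    -- f is normal: c f = f σ(c) for an automorphism σ, and for any square
    -- root p of q^{−n²} the map τ below is an automorphism with τ² = σ and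
    -- τ(f) = f
    (∀ p : k, p ^ 2 = (q ^ (n ^ 2))⁻¹ →
      ∃ τ : C18 k q n →ₐ[k] C18 k q n,
        τ (a 0) = p • a 0 ∧ τ (a 1) = a 1 ∧ τ (a 2) = p⁻¹ • a 2 ∧
        Function.Bijective τ ∧ τ f = f ∧
        (∀ c : C18 k q n, c * f = f * τ (τ c))) := by
  set a : Fin 3 → C18 k q n := gen18 k q n with ha
  set c : k := q ^ (n * (n - 1) / 2) with hc
  set f : C18 k q n := a 1 ^ n - c • (a 0 * a 2) with hf
  have hQ0 : (q : k) ^ (n ^ 2) ≠ 0 := pow_ne_zero _ hq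
  have h1 : a 1 * a 0 = (q ^ n) • (a 0 * a 1) := Stmt18.r1
  have h2 : a 2 * a 0 = (q ^ (n ^ 2)) • (a 0 * a 2) := Stmt18.r2
  have h3 : a 2 * a 1 = (q ^ n) • (a 1 * a 2) := Stmt18.r3
  have hnn : ((q : k) ^ n) ^ n = q ^ (n ^ 2) := by rw [← pow_mul, sq]
  have hp1 : a 1 ^ n * a 0 = (q ^ (n ^ 2)) • (a 0 * a 1 ^ n) := by
    rw [Stmt18.pow_swap h1 n, hnn]
  have hp3 : a 2 * a 1 ^ n = (q ^ (n ^ 2)) • (a 1 ^ n * a 2) := by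
    rw [Stmt18.pow_swap' h3 n, hnn]
  have g1 : a 0 * f = (q ^ (n ^ 2))⁻¹ • (f * a 0) := by
    rw [eq_inv_smul_iff₀ hQ0, hf, mul_sub, sub_mul, smul_sub, hp1]
    congr 1
    rw [mul_smul_comm, smul_mul_assoc, mul_assoc, h2, mul_smul_comm,
      smul_smul, smul_smul, mul_comm c]
  have g2 : a 1 * f = f * a 1 := by
    rw [hf, mul_sub, sub_mul]
    congr 1
    · rw [← pow_succ, ← pow_succ']
    · rw [mul_smul_comm, smul_mul_assoc, ← mul_assoc, h1, smul_mul_assoc,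
        mul_assoc, mul_assoc, h3, mul_smul_comm]
  have g3 : a 2 * f = (q ^ (n ^ 2)) • (f * a 2) := by
    rw [hf, mul_sub, sub_mul, smul_sub, hp3]
    congr 1
    rw [mul_smul_comm, smul_mul_assoc, ← mul_assoc, h2, smul_mul_assoc,
      mul_assoc, smul_smul, smul_smul, mul_comm c]
  refine ⟨g1, g2, g3, ?_⟩
  intro p hp
  have hpne : p ≠ 0 := by
    intro h
    rw [h] at hp
    exact inv_ne_zero hQ0 (by simpa using hp.symm)
  refine ⟨Stmt18.tau k q n p, ?_, ?_, ?_, ?_, ?_, ?_⟩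
  · simpa using Stmt18.tau_gen p 0
  · simpa using Stmt18.tau_gen p 1
  · simpa using Stmt18.tau_gen p 2
  · refine Function.bijective_iff_has_inverse.mpr ⟨Stmt18.tau k q n p⁻¹, ?_, ?_⟩
    · intro x
      rw [← AlgHom.comp_apply, Stmt18.tau_comp p p⁻¹ hpne (inv_mul_cancel₀ hpne),
        AlgHom.id_apply]
    · intro x
      rw [← AlgHom.comp_apply, Stmt18.tau_comp p⁻¹ p (inv_ne_zero hpne)
        (mul_inv_cancel₀ hpne), AlgHom.id_apply]
  · rw [hf, map_sub, map_pow, map_smul, map_mul]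
    have t0 := Stmt18.tau_gen (q := q) (n := n) p 0
    have t1 := Stmt18.tau_gen (q := q) (n := n) p 1
    have t2 := Stmt18.tau_gen (q := q) (n := n) p 2
    simp only [Matrix.cons_val_zero, Matrix.cons_val_one, Matrix.head_cons,
      Matrix.cons_val_two, Matrix.tail_cons] at t0 t1 t2
    show _ - c • (Stmt18.tau k q n p (a 0) * Stmt18.tau k q n p (a 2)) = _
    rw [t0, t1, t2, one_smul, smul_mul_assoc, mul_smul_comm, smul_smul,
      smul_smul, mul_assoc, mul_inv_cancel₀ hpne, mul_one]
  · have t0 : Stmt18.tau k q n p (Stmt18.tau k q n p (a 0)) = (q ^ (n ^ 2))⁻¹ • a 0 := by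
      have := Stmt18.tau_gen (q := q) (n := n) p 0
      simp only [Matrix.cons_val_zero] at this
      rw [show a 0 = gen18 k q n 0 from rfl, this, map_smul, this, smul_smul, ← sq, hp]
    have t1 : Stmt18.tau k q n p (Stmt18.tau k q n p (a 1)) = a 1 := by
      have := Stmt18.tau_gen (q := q) (n := n) p 1
      simp only [Matrix.cons_val_one, Matrix.head_cons, Matrix.cons_val_zero] at this
      rw [show a 1 = gen18 k q n 1 from rfl, this, one_smul, this, one_smul]
    have t2 : Stmt18.tau k q n p (Stmt18.tau k q n p (a 2)) = (q ^ (n ^ 2)) • a 2 := by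
      have := Stmt18.tau_gen (q := q) (n := n) p 2
      simp only [Matrix.cons_val_two, Matrix.tail_cons, Matrix.head_cons] at this
      rw [show a 2 = gen18 k q n 2 from rfl, this, map_smul, this, smul_smul,
        ← mul_inv_rev, ← sq, hp, inv_inv]
    intro x
    obtain ⟨y, rfl⟩ := RingQuot.mkAlgHom_surjective k (rel18 k q n) x
    induction y using FreeAlgebra.induction with
    | grade0 r =>
      rw [AlgHom.commutes, AlgHom.commutes, AlgHom.commutes]
      exact (Algebra.commutes r f).symm ▸ Algebra.commutes r f
    | grade1 i =>
      fin_cases i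
      · show a 0 * f = f * Stmt18.tau k q n p (Stmt18.tau k q n p (a 0))
        rw [t0, g1, mul_smul_comm]
      · show a 1 * f = f * Stmt18.tau k q n p (Stmt18.tau k q n p (a 1))
        rw [t1, g2]
      · show a 2 * f = f * Stmt18.tau k q n p (Stmt18.tau k q n p (a 2))
        rw [t2, g3, mul_smul_comm]
    | mul x y hx hy =>
      rw [map_mul, map_mul, map_mul, mul_assoc, hy, ← mul_assoc, hx, mul_assoc]
    | add x y hx hy =>
      rw [map_add, map_add, map_add, add_mul, mul_add, hx, hy]
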